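/- Let ζ₁,…,ζ_L be independent real-valued random variables on a probability space, each with mean zero and taking values in [−1,1] almost surely. Define the random vector [a;h] by a = ā + Σ_{ℓ=1}^L ζ_ℓ a^ℓ ∈ ℝⁿ and h = h̄ + Σ_{ℓ=1}^L ζ_ℓ h^ℓ ∈ ℝ, where ā, a¹,…,a^L ∈ ℝⁿ and h̄, h¹,…,h^L ∈ ℝ are fixed. Let Ω ≥ 0 and suppose x ∈ ℝⁿ satisfies the second-order cone inequality Ω·√(Σ_{ℓ=1}^L ((a^ℓ)ᵀx − h^ℓ)²) ≤ h̄ − āᵀx. Then Prob{ aᵀx > h } ≤ e^{−Ω²/2}. -/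

import Mathlib

open MeasureTheory ProbabilityTheory

lemma hoeff_int {α : Type*} [MeasurableSpace α] (μ : Measure α) [IsProbabilityMeasure μ]
    {ζ : α → ℝ} (hm : Measurable ζ) (hb : ∀ᵐ ω ∂μ, ζ ω ∈ Set.Icc (-1 : ℝ) 1) (u : ℝ) :
    Integrable (fun ω => Real.exp (u * ζ ω)) μ := by
  refine Integrable.mono' (integrable_const (Real.exp |u|))
    ((hm.const_mul u).exp.aestronglyMeasurable) ?_
  filter_upwards [hb] with ω hω
  rw [Real.norm_eq_abs, Real.abs_exp]
  apply Real.exp_le_exp.2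
  calc u * ζ ω ≤ |u * ζ ω| := le_abs_self _
    _ = |u| * |ζ ω| := abs_mul _ _
    _ ≤ |u| * 1 := by
        have := abs_le.2 ⟨hω.1, hω.2⟩
        exact mul_le_mul_of_nonneg_left this (abs_nonneg u)
    _ = |u| := mul_one _

lemma hoeff_lemma {α : Type*} [MeasurableSpace α] (μ : Measure α) [IsProbabilityMeasure μ]
    {ζ : α → ℝ} (hm : Measurable ζ) (h0 : ∫ ω, ζ ω ∂μ = 0)
    (hb : ∀ᵐ ω ∂μ, ζ ω ∈ Set.Icc (-1 : ℝ) 1) (u : ℝ) :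
    ∫ ω, Real.exp (u * ζ ω) ∂μ ≤ Real.exp (u ^ 2 / 2) := by
  have hζint : Integrable ζ μ := by
    refine Integrable.mono' (integrable_const 1) hm.aestronglyMeasurable ?_
    filter_upwards [hb] with ω hω
    exact abs_le.2 ⟨hω.1, hω.2⟩
  have hRHSint : Integrable
      (fun ω => (Real.exp (-u) + Real.exp u) / 2 +
        ζ ω * ((Real.exp u - Real.exp (-u)) / 2)) μ :=
    (integrable_const _).add (hζint.mul_const _)
  have hle : ∀ᵐ ω ∂μ, Real.exp (u * ζ ω) ≤
      (Real.exp (-u) + Real.exp u) / 2 + ζ ω * ((Real.exp u - Real.exp (-u)) / 2) := by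
    filter_upwards [hb] with ω hω
    have h1 : (0 : ℝ) ≤ (1 - ζ ω) / 2 := by linarith [hω.2]
    have h2 : (0 : ℝ) ≤ (1 + ζ ω) / 2 := by linarith [hω.1]
    have hsum : (1 - ζ ω) / 2 + (1 + ζ ω) / 2 = 1 := by ring
    have := convexOn_exp.2 (Set.mem_univ (-u)) (Set.mem_univ u) h1 h2 hsum
    simp only [smul_eq_mul] at this
    calc Real.exp (u * ζ ω)
        = Real.exp ((1 - ζ ω) / 2 * (-u) + (1 + ζ ω) / 2 * u) := by ring_nf
      _ ≤ (1 - ζ ω) / 2 * Real.exp (-u) + (1 + ζ ω) / 2 * Real.exp u := this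
      _ = (Real.exp (-u) + Real.exp u) / 2 + ζ ω * ((Real.exp u - Real.exp (-u)) / 2) := by
          ring
  calc ∫ ω, Real.exp (u * ζ ω) ∂μ
      ≤ ∫ ω, ((Real.exp (-u) + Real.exp u) / 2 +
        ζ ω * ((Real.exp u - Real.exp (-u)) / 2)) ∂μ :=
        integral_mono_ae (hoeff_int μ hm hb u) hRHSint hle
    _ = (Real.exp (-u) + Real.exp u) / 2 := by
        rw [integral_add (integrable_const _) (hζint.mul_const _), integral_const,
          integral_mul_const, h0]
        simp
    _ = Real.cosh u := by rw [Real.cosh_eq]; ring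
    _ ≤ Real.exp (u ^ 2 / 2) := Real.cosh_le_exp_half_sq u

/-- Proposition 2.1: if `x` satisfies the second-order cone inequality
`Ω √(∑ ((aℓ)ᵀx - hℓ)²) ≤ h̄ - āᵀx`, then for the random data
`a = ā + ∑ ζℓ aℓ`, `h = h̄ + ∑ ζℓ hℓ` with independent zero-mean `ζℓ ∈ [-1,1]` a.s.,
`Prob{aᵀx > h} ≤ exp (-Ω²/2)`. -/
theorem stmt_1 {α : Type*} [MeasurableSpace α] (μ : Measure α) [IsProbabilityMeasure μ]
    (L n : ℕ) (ζ : Fin L → α → ℝ)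
    (hmeas : ∀ ℓ, Measurable (ζ ℓ))
    (hindep : iIndepFun ζ μ)
    (hmean : ∀ ℓ, ∫ ω, ζ ℓ ω ∂μ = 0)
    (hbdd : ∀ ℓ, ∀ᵐ ω ∂μ, ζ ℓ ω ∈ Set.Icc (-1 : ℝ) 1)
    (abar : Fin n → ℝ) (a : Fin L → Fin n → ℝ) (hbar : ℝ) (h : Fin L → ℝ)
    (Om : ℝ) (hOm : 0 ≤ Om) (x : Fin n → ℝ)
    (hsocc : Om * Real.sqrt (∑ ℓ, (∑ i, a ℓ i * x i - h ℓ) ^ 2) ≤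
      hbar - ∑ i, abar i * x i) :
    μ {ω | ∑ i, (abar i + ∑ ℓ, ζ ℓ ω * a ℓ i) * x i >
        hbar + ∑ ℓ, ζ ℓ ω * h ℓ} ≤ ENNReal.ofReal (Real.exp (-Om ^ 2 / 2)) := by
  classical
  set c : Fin L → ℝ := fun ℓ => ∑ i, a ℓ i * x i - h ℓ with hc
  set t : ℝ := hbar - ∑ i, abar i * x i with ht
  -- rewrite the event
  have key : ∀ ω, ∑ i, (abar i + ∑ ℓ, ζ ℓ ω * a ℓ i) * x i =
      ∑ i, abar i * x i + ∑ ℓ, ζ ℓ ω * ∑ i, a ℓ i * x i := by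
    intro ω
    simp_rw [add_mul, Finset.sum_add_distrib, Finset.sum_mul, Finset.mul_sum, mul_assoc]
    rw [Finset.sum_comm]
  have hsplit : ∀ ω, ∑ ℓ, ζ ℓ ω * c ℓ =
      (∑ ℓ, ζ ℓ ω * ∑ i, a ℓ i * x i) - ∑ ℓ, ζ ℓ ω * h ℓ := by
    intro ω
    simp [hc, mul_sub, Finset.sum_sub_distrib]
  have hevent : {ω | ∑ i, (abar i + ∑ ℓ, ζ ℓ ω * a ℓ i) * x i >
      hbar + ∑ ℓ, ζ ℓ ω * h ℓ} = {ω | t < ∑ ℓ, ζ ℓ ω * c ℓ} := by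
    ext ω
    simp only [Set.mem_setOf_eq, gt_iff_lt]
    rw [key ω, hsplit ω, ht]
    constructor <;> intro hω <;> linarith
  rw [hevent]
  set σ : ℝ := Real.sqrt (∑ ℓ, c ℓ ^ 2) with hσ
  have hσ0 : 0 ≤ σ := Real.sqrt_nonneg _
  have htnn : 0 ≤ t := le_trans (mul_nonneg hOm hσ0) hsocc
  by_cases hσz : σ = 0
  · -- all cℓ = 0, event is empty
    have hsum0 : ∑ ℓ, c ℓ ^ 2 = 0 := by
      have := Real.sqrt_eq_zero (Finset.sum_nonneg fun ℓ _ => sq_nonneg _) |>.1 hσz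
      exact this
    have hcz : ∀ ℓ, c ℓ = 0 := by
      intro ℓ
      have := (Finset.sum_eq_zero_iff_of_nonneg (fun ℓ _ => sq_nonneg (c ℓ))).1 hsum0 ℓ
        (Finset.mem_univ ℓ)
      exact pow_eq_zero_iff (by norm_num) |>.1 this
    have : {ω : α | t < ∑ ℓ, ζ ℓ ω * c ℓ} = ∅ := by
      ext ω
      simp only [Set.mem_setOf_eq, Set.mem_empty_iff_false, iff_false, not_lt]
      calc ∑ ℓ, ζ ℓ ω * c ℓ = 0 := by simp [hcz]
        _ ≤ t := htnn
    rw [this]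
    simp
  · have hσpos : 0 < σ := lt_of_le_of_ne hσ0 (Ne.symm hσz)
    have hσsq : σ ^ 2 = ∑ ℓ, c ℓ ^ 2 :=
      Real.sq_sqrt (Finset.sum_nonneg fun ℓ _ => sq_nonneg _)
    set s : ℝ := Om / σ with hs
    have hsnn : 0 ≤ s := div_nonneg hOm hσ0
    set X : Fin L → α → ℝ := fun ℓ ω => ζ ℓ ω * c ℓ with hX
    have hXmeas : ∀ ℓ, Measurable (X ℓ) := fun ℓ => (hmeas ℓ).mul_const _
    have hXindep : iIndepFun X μ :=
      hindep.comp (fun ℓ z => z * c ℓ) (fun ℓ => measurable_id.mul_const _)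
    have hXint : ∀ ℓ ∈ Finset.univ, Integrable (fun ω => Real.exp (s * X ℓ ω)) μ := by
      intro ℓ _
      have := hoeff_int μ (hmeas ℓ) (hbdd ℓ) (s * c ℓ)
      simpa [hX, mul_comm, mul_assoc, mul_left_comm] using this
    have hint : Integrable (fun ω => Real.exp (s * (∑ ℓ, X ℓ) ω)) μ :=
      hXindep.integrable_exp_mul_sum hXmeas hXint
    -- Chernoff
    have hcher := measure_ge_le_exp_mul_mgf (μ := μ) (X := ∑ ℓ, X ℓ) (t := s) t hsnn hint
    have hmgf : mgf (∑ ℓ, X ℓ) μ s ≤ Real.exp (Om ^ 2 / 2) := by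
      rw [hXindep.mgf_sum hXmeas]
      calc ∏ ℓ, mgf (X ℓ) μ s ≤ ∏ ℓ, Real.exp (s ^ 2 * c ℓ ^ 2 / 2) := by
            refine Finset.prod_le_prod (fun ℓ _ => mgf_nonneg) (fun ℓ _ => ?_)
            have h1 := hoeff_lemma μ (hmeas ℓ) (hmean ℓ) (hbdd ℓ) (s * c ℓ)
            have h2 : mgf (X ℓ) μ s = ∫ ω, Real.exp ((s * c ℓ) * ζ ℓ ω) ∂μ := by
              unfold mgf
              congr 1
              ext ω
              simp [hX]; ring_nf
            rw [h2]
            calc ∫ ω, Real.exp ((s * c ℓ) * ζ ℓ ω) ∂μ ≤ Real.exp ((s * c ℓ) ^ 2 / 2) := h1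
              _ = Real.exp (s ^ 2 * c ℓ ^ 2 / 2) := by ring_nf
        _ = Real.exp (∑ ℓ, s ^ 2 * c ℓ ^ 2 / 2) := by rw [Real.exp_sum]
        _ = Real.exp (s ^ 2 * σ ^ 2 / 2) := by
            congr 1
            rw [hσsq, Finset.mul_sum, Finset.sum_div]
        _ = Real.exp (Om ^ 2 / 2) := by
            congr 1
            rw [hs]
            field_simp
    have hst : Om ^ 2 ≤ s * t := by
      have h1 : Om * σ ≤ t := hsocc
      calc Om ^ 2 = (Om / σ) * (Om * σ) := by field_simp
        _ ≤ (Om / σ) * t := mul_le_mul_of_nonneg_left h1 hsnn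
        _ = s * t := rfl
    have hfinal : (μ {ω | t ≤ (∑ ℓ, X ℓ) ω}).toReal ≤ Real.exp (-Om ^ 2 / 2) := by
      calc (μ {ω | t ≤ (∑ ℓ, X ℓ) ω}).toReal ≤ Real.exp (-s * t) * mgf (∑ ℓ, X ℓ) μ s := hcher
        _ ≤ Real.exp (-s * t) * Real.exp (Om ^ 2 / 2) :=
            mul_le_mul_of_nonneg_left hmgf (Real.exp_nonneg _)
        _ = Real.exp (-(s * t) + Om ^ 2 / 2) := by rw [← Real.exp_add, neg_mul]
        _ ≤ Real.exp (-Om ^ 2 / 2) := Real.exp_le_exp.2 (by nlinarith [hst])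
    calc μ {ω | t < ∑ ℓ, ζ ℓ ω * c ℓ} ≤ μ {ω | t ≤ (∑ ℓ, X ℓ) ω} := by
          apply measure_mono
          intro ω hω
          simp only [Set.mem_setOf_eq, Finset.sum_apply] at *
          exact le_of_lt hω
      _ ≤ ENNReal.ofReal (Real.exp (-Om ^ 2 / 2)) := by
          rw [← ENNReal.ofReal_toReal (measure_ne_top μ _)]
          exact ENNReal.ofReal_le_ofReal hfinal
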